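/- Invariantizing x_{0,1} under the heat-equation product frame gives ι(x_{0,1}) = σ + 2(e^τ − 1)(ln u)_x^d, where σ = x_{0,1} − x_{0,0} and τ = t_{0,1} − t_{0,0}. Consequently, the mesh equation σ = 2(1 − e^τ)(ln u)_x^d is invariant under the group action. -/
import Mathlib


/-- Invariantizing `x₀₁` under the heat-equation product frame gives
`ι(x₀₁) = σ + 2(e^τ − 1)(ln u)_x^d`; consequently the mesh equation
`σ = 2(1 − e^τ)(ln u)_x^d` is invariant under the group action. -/
theorem heat_mesh_invariant
    (xm1 x00 x1 x01 t00 t01 : ℝ) (um1 u00 u1 : ℝ)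
    (hum1 : 0 < um1) (hu00 : 0 < u00) (hu1 : 0 < u1)
    (hx : x1 ≠ xm1)
    (σ τ p : ℝ)
    (hσ : σ = x01 - x00) (hτ : τ = t01 - t00)
    (hp : p = (Real.log u1 - Real.log um1) / (x1 - xm1))
    (l1 l2 l3 l4 : ℝ)
    (hl1 : l1 = -t00) (hl2 : l2 = -(x00 + 2 * p))
    (hl3 : l3 = Real.exp (-t00) * p)
    (hl4 : l4 = Real.exp (-t00) * (-Real.log u00 + x00 * p + p ^ 2)) :
    -- invariantization of x₀₁ under the product frame
    (x01 + 2 * l3 * Real.exp t01 + l2 = σ + 2 * (Real.exp τ - 1) * p)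
    ∧
    -- the mesh equation σ = 2(1 − e^τ)(ln u)_x^d is invariant under the action
    (∀ m1 m2 m3 m4 : ℝ,
      ((x01 + 2 * m3 * Real.exp t01 + m2) - (x00 + 2 * m3 * Real.exp t00 + m2)
        = 2 * (1 - Real.exp ((t01 + m1) - (t00 + m1))) *
          (((Real.log u1 - m3 * Real.exp t00 * x1
              - m3 ^ 2 * Real.exp (2 * t00) + m4 * Real.exp t00)
            - (Real.log um1 - m3 * Real.exp t00 * xm1
              - m3 ^ 2 * Real.exp (2 * t00) + m4 * Real.exp t00))
            / ((x1 + 2 * m3 * Real.exp t00 + m2)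
              - (xm1 + 2 * m3 * Real.exp t00 + m2))))
      ↔ σ = 2 * (1 - Real.exp τ) * p) := by
  have hxs : x1 - xm1 ≠ 0 := sub_ne_zero.mpr hx
  have hpd : p * (x1 - xm1) = Real.log u1 - Real.log um1 := by
    rw [hp]; field_simp
  have he : Real.exp τ * Real.exp t00 = Real.exp t01 := by
    rw [hτ, ← Real.exp_add]; ring_nf
  have he2 : Real.exp (-t00) * Real.exp t01 = Real.exp τ := by
    rw [← Real.exp_add, hτ]; ring_nf
  subst hσ
  constructor
  · rw [hl3, hl2]
    linear_combination 2 * p * he2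
  · intro m1 m2 m3 m4
    have ht : (t01 + m1) - (t00 + m1) = τ := by rw [hτ]; ring
    rw [ht]
    have hden : (x1 + 2 * m3 * Real.exp t00 + m2)
        - (xm1 + 2 * m3 * Real.exp t00 + m2) = x1 - xm1 := by ring
    rw [hden]
    have hq : ((Real.log u1 - m3 * Real.exp t00 * x1
              - m3 ^ 2 * Real.exp (2 * t00) + m4 * Real.exp t00)
            - (Real.log um1 - m3 * Real.exp t00 * xm1
              - m3 ^ 2 * Real.exp (2 * t00) + m4 * Real.exp t00))
            / (x1 - xm1) = p - m3 * Real.exp t00 := by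
      rw [div_eq_iff hxs]; linear_combination -hpd
    rw [hq]
    constructor <;> intro h
    · linear_combination h + 2 * m3 * he
    · linear_combination h - 2 * m3 * he
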